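/- Let θ_F ∈ (0, π/2], α* = 2/(1 + sin θ_F), and α₁ = α₂ = α*. Then for any θ with θ_F ≤ θ ≤ π/2, the quantity f(θ) = (2 − 2α* + (α*)² cos²θ)/2 satisfies |f(θ)| ≤ α* − 1, and consequently the complex eigenvalues λ = f(θ) ± sqrt(f(θ)² − (1−α*)²) (interpreted with imaginary square root when the radicand is negative) have modulus exactly α* − 1 = (1 − sin θ_F)/(1 + sin θ_F). -/

import Mathlib

/-- With `α₁ = α₂ = α* = 2/(1+sin θ_F)` and `θ_F ≤ θ ≤ π/2`, the block
eigenvalue mean `f(θ)` satisfies `|f(θ)| ≤ α* - 1`, and the corresponding complex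
eigenvalues `f(θ) ± i√((1-α*)² - f(θ)²)` have modulus exactly
`α* - 1 = (1 - sin θ_F)/(1 + sin θ_F)`. -/
theorem eigenvalue_modulus_at_optimal_params (θF αs θ f : ℝ)
    (hθF : θF ∈ Set.Ioc 0 (Real.pi/2)) (hαs : αs = 2/(1 + Real.sin θF))
    (hθ1 : θF ≤ θ) (hθ2 : θ ≤ Real.pi/2)
    (hf : f = (2 - 2*αs + αs^2 * Real.cos θ ^ 2)/2) :
    |f| ≤ αs - 1
    ∧ (∀ lam : ℂ,
        (lam = (f : ℂ) + Complex.I * (Real.sqrt ((1 - αs)^2 - f^2) : ℝ) ∨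
         lam = (f : ℂ) - Complex.I * (Real.sqrt ((1 - αs)^2 - f^2) : ℝ)) →
        ‖lam‖ = αs - 1)
    ∧ αs - 1 = (1 - Real.sin θF)/(1 + Real.sin θF) := by
  obtain ⟨hθF0, hθFle⟩ := hθF
  set s := Real.sin θF with hs
  have hpi : Real.pi / 2 < Real.pi := by
    have := Real.pi_pos; linarith
  have hs0 : 0 < s := Real.sin_pos_of_pos_of_lt_pi hθF0 (lt_of_le_of_lt hθFle hpi)
  have hs1 : s ≤ 1 := Real.sin_le_one θF
  have h1s : (0:ℝ) < 1 + s := by linarith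
  have hα : αs * (1 + s) = 2 := by
    rw [hαs]; field_simp
  -- cosines
  have hcθ0 : 0 ≤ Real.cos θ := Real.cos_nonneg_of_mem_Icc ⟨by linarith, hθ2⟩
  have hcF : Real.cos θ ≤ Real.cos θF :=
    Real.cos_le_cos_of_nonneg_of_le_pi (le_of_lt hθF0) (by linarith) hθ1
  have hcF0 : 0 ≤ Real.cos θF := Real.cos_nonneg_of_mem_Icc ⟨by linarith, hθFle⟩
  have hsq : Real.cos θF ^ 2 = 1 - s ^ 2 := by
    have := Real.sin_sq_add_cos_sq θF
    nlinarith
  have hc2 : Real.cos θ ^ 2 ≤ 1 - s ^ 2 := by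
    nlinarith
  have h3 : αs ^ 2 * (1 - s ^ 2) = 2 * (αs * (1 - s)) := by
    linear_combination (αs * (1 - s)) * hα
  have habs : |f| ≤ αs - 1 := by
    rw [abs_le]
    constructor
    · nlinarith [sq_nonneg (Real.cos θ), sq_nonneg (1 + s)]
    · nlinarith [mul_le_mul_of_nonneg_left hc2 (sq_nonneg αs), hα, h3]
  have hα1 : 0 ≤ αs - 1 := le_trans (abs_nonneg f) habs
  have hrad : 0 ≤ (1 - αs) ^ 2 - f ^ 2 := by
    have : f ^ 2 ≤ (αs - 1) ^ 2 := by nlinarith [abs_le.mp habs]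
    nlinarith
  refine ⟨habs, ?_, ?_⟩
  · intro lam hlam
    have hr2 : Real.sqrt ((1 - αs) ^ 2 - f ^ 2) ^ 2 = (1 - αs) ^ 2 - f ^ 2 :=
      Real.sq_sqrt hrad
    have key : ∀ b : ℝ, b ^ 2 = (1 - αs) ^ 2 - f ^ 2 →
        ‖(f : ℂ) + b * Complex.I‖ = αs - 1 := by
      intro b hb
      rw [Complex.norm_add_mul_I, hb]
      have : f ^ 2 + ((1 - αs) ^ 2 - f ^ 2) = (αs - 1) ^ 2 := by ring
      rw [this, Real.sqrt_sq hα1]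
    set r := Real.sqrt ((1 - αs) ^ 2 - f ^ 2) with hrdef
    rcases hlam with h | h
    · have : lam = (f : ℂ) + (r : ℝ) * Complex.I := by rw [h]; ring
      rw [this]; exact key _ hr2
    · have : lam = (f : ℂ) + ((-r : ℝ) : ℝ) * Complex.I := by rw [h]; push_cast; ring
      rw [this]; exact key _ (by rw [neg_sq]; exact hr2)
  · rw [hαs]; field_simp; ring
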